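/- For an integer a and natural numbers s, t, the symmetric Gaussian binomials satisfy the product expansion [a, s]·[a, t] = ∑_{γ=0}^{min(s,t)} v^{s·t - a·γ} · [a, s+t-γ] · [s+t-γ; γ, s-γ, t-γ], where [m; γ, s-γ, t-γ] denotes the symmetric Gaussian multinomial coefficient [m, γ]·[m-γ, s-γ]·[m-γ-(s-γ), t-γ] with m = s+t-γ. -/
import Mathlib


/-- The indeterminate `v`, viewed in the field of rational functions `ℚ(v)`. -/
noncomputable def v : RatFunc ℚ := RatFunc.X

/-- The Gaussian binomial `[[N, t]] = ∏_{i=1}^{t} (v^{2(N-i+1)} - 1)/(v^{2i} - 1)`. -/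
noncomputable def dblBrack (N : ℤ) (t : ℕ) : RatFunc ℚ :=
  ∏ i ∈ Finset.range t, (v ^ (2 * (N - (i : ℤ))) - 1) / (v ^ (2 * ((i : ℤ) + 1)) - 1)

/-- The symmetric Gaussian binomial `[N, t] = v^{-t(N-t)} [[N, t]]`. -/
noncomputable def symBrack (N : ℤ) (t : ℕ) : RatFunc ℚ :=
  v ^ (-(t : ℤ) * (N - (t : ℤ))) * dblBrack N t

lemma v_ne_zero : v ≠ 0 := RatFunc.X_ne_zero

lemma v_pow_ne_one {m : ℕ} (hm : m ≠ 0) : v ^ m ≠ 1 := by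
  intro h
  have : (Polynomial.X : Polynomial ℚ) ^ m = 1 := by
    apply RatFunc.algebraMap_injective ℚ
    simpa [v, RatFunc.algebraMap_X, map_pow] using h
  have := congrArg Polynomial.natDegree this
  simp [Polynomial.natDegree_X_pow] at this
  exact hm this

lemma v_zpow_ne_one {n : ℤ} (hn : n ≠ 0) : v ^ n ≠ 1 := by
  rcases lt_or_gt_of_ne hn with h | h
  · intro he
    have : v ^ (-n) = 1 := by
      rw [zpow_neg, he, inv_one]
    rw [show -n = ((-n).toNat : ℤ) by omega, zpow_natCast] at this
    exact v_pow_ne_one (by omega) this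
  · intro he
    rw [show n = (n.toNat : ℤ) by omega, zpow_natCast] at he
    exact v_pow_ne_one (by omega) he

lemma vE_ne_zero {n : ℤ} (hn : n ≠ 0) : v ^ (2 * n) - 1 ≠ 0 :=
  sub_ne_zero.mpr (v_zpow_ne_one (by omega))

/-- `E n = v^(2n) - 1` with natural exponent. -/
noncomputable def E (n : ℕ) : RatFunc ℚ := v ^ (2 * n) - 1

lemma E_eq (n : ℕ) : E n = v ^ (2 * (n : ℤ)) - 1 := by
  rw [E, ← zpow_natCast v (2 * n)]; norm_num

lemma E_ne_zero {n : ℕ} (hn : n ≠ 0) : E n ≠ 0 := by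
  rw [E_eq]; exact vE_ne_zero (by omega)

lemma dbl_zero (N : ℤ) : dblBrack N 0 = 1 := by simp [dblBrack]

/-- column step -/
lemma dbl_step (N : ℤ) (k : ℕ) :
    dblBrack N (k + 1) * (v ^ (2 * ((k : ℤ) + 1)) - 1)
      = dblBrack N k * (v ^ (2 * (N - (k : ℤ))) - 1) := by
  rw [dblBrack, Finset.prod_range_succ, ← dblBrack, mul_assoc,
    div_mul_cancel₀]
  exact vE_ne_zero (by omega)

/-- row step -/
lemma dbl_shift (N : ℤ) (k : ℕ) :
    dblBrack (N + 1) k * (v ^ (2 * (N + 1 - (k : ℤ))) - 1)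
      = dblBrack N k * (v ^ (2 * (N + 1)) - 1) := by
  have hnum : (∏ i ∈ Finset.range k, (v ^ (2 * (N + 1 - (i : ℤ))) - 1))
        * (v ^ (2 * (N + 1 - (k : ℤ))) - 1)
      = (∏ i ∈ Finset.range k, (v ^ (2 * (N - (i : ℤ))) - 1))
        * (v ^ (2 * (N + 1)) - 1) := by
    rw [← Finset.prod_range_succ (fun i => (v ^ (2 * (N + 1 - (i : ℤ))) - 1)) k,
      Finset.prod_range_succ']
    simp only [Nat.cast_add, Nat.cast_one, Nat.cast_zero]
    congr 1
    · apply Finset.prod_congr rfl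
      intro i _
      congr 2
      ring
    · congr 2; ring
  rw [dblBrack, dblBrack, Finset.prod_div_distrib, Finset.prod_div_distrib,
    div_mul_eq_mul_div, div_mul_eq_mul_div, hnum]

lemma dbl_step_nat (N k : ℕ) (h : k ≤ N) :
    dblBrack N (k + 1) * E (k + 1) = dblBrack N k * E (N - k) := by
  rw [E_eq, E_eq,
    show ((k + 1 : ℕ) : ℤ) = (k : ℤ) + 1 by push_cast; ring,
    show ((N - k : ℕ) : ℤ) = (N : ℤ) - k by omega]
  exact dbl_step N k

lemma dbl_shift_nat (N k : ℕ) (h : k ≤ N + 1) :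
    dblBrack ((N : ℤ) + 1) k * E (N + 1 - k) = dblBrack N k * E (N + 1) := by
  rw [E_eq, E_eq,
    show ((N + 1 - k : ℕ) : ℤ) = (N : ℤ) + 1 - k by omega,
    show ((N + 1 : ℕ) : ℤ) = (N : ℤ) + 1 by push_cast; ring]
  exact dbl_shift N k

/-- the coefficient `c_γ(s,t)` (natural powers / truncated subtraction). -/
noncomputable def cc (s t γ : ℕ) : RatFunc ℚ :=
  v ^ (2 * (s - γ) * (t - γ)) * dblBrack ((s : ℤ) + t - γ) γ *
    dblBrack ((s : ℤ) + t - 2 * γ) (s - γ)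

lemma dbl_split (a : ℤ) (m u : ℕ) :
    dblBrack a m * (v ^ (2 * (a - m + u)) - 1)
      = v ^ (2 * u) * E (m + 1) * dblBrack a (m + 1)
        + (v ^ (2 * u) - 1) * dblBrack a m := by
  have h := dbl_step a m
  have hv : v ^ (2 * (a - (m : ℤ) + u)) = v ^ (2 * u) * v ^ (2 * (a - m)) := by
    rw [← zpow_natCast v (2 * u), ← zpow_add₀ v_ne_zero]
    congr 1; push_cast; ring
  rw [hv, E_eq, show ((m + 1 : ℕ) : ℤ) = (m : ℤ) + 1 by push_cast; ring]
  linear_combination (-(v ^ (2 * u))) * h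

lemma starc (γ s' t' : ℕ) :
    E (γ + s' + 2) * cc (γ + s' + 2) (γ + t' + 1) (γ + 1)
      = v ^ (2 * t') * E (γ + s' + t' + 2) * cc (γ + s' + 1) (γ + t' + 1) (γ + 1)
        + E (t' + 1) * cc (γ + s' + 1) (γ + t' + 1) γ := by
  have hP : E (s' + t' + 1) * E (s' + 1) * E (s' + t' + 2) * E (t' + 1) ≠ 0 := by
    refine mul_ne_zero (mul_ne_zero (mul_ne_zero ?_ ?_) ?_) ?_ <;>
      exact E_ne_zero (by omega)
  apply mul_right_cancel₀ hP
  -- instance relations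
  have h1 := dbl_shift_nat (γ + s' + t' + 1) (γ + 1) (by omega)
  rw [show ((γ + s' + t' + 1 : ℕ) : ℤ) + 1 = ((γ + s' + t' + 2 : ℕ) : ℤ) by push_cast; ring,
    show γ + s' + t' + 1 + 1 - (γ + 1) = s' + t' + 1 by omega,
    show γ + s' + t' + 1 + 1 = γ + s' + t' + 2 by omega] at h1
  have h2 := dbl_step_nat (s' + t' + 1) s' (by omega)
  rw [show s' + t' + 1 - s' = t' + 1 by omega] at h2
  have h3 := dbl_shift_nat (s' + t') s' (by omega)
  rw [show ((s' + t' : ℕ) : ℤ) + 1 = ((s' + t' + 1 : ℕ) : ℤ) by push_cast; ring,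
    show s' + t' + 1 - s' = t' + 1 by omega] at h3
  have h4 := dbl_shift_nat (γ + s' + t' + 1) γ (by omega)
  rw [show ((γ + s' + t' + 1 : ℕ) : ℤ) + 1 = ((γ + s' + t' + 2 : ℕ) : ℤ) by push_cast; ring,
    show γ + s' + t' + 1 + 1 - γ = s' + t' + 2 by omega,
    show γ + s' + t' + 1 + 1 = γ + s' + t' + 2 by omega] at h4
  have h5 := dbl_step_nat (γ + s' + t' + 1) γ (by omega)
  rw [show γ + s' + t' + 1 - γ = s' + t' + 1 by omega] at h5
  have h6 := dbl_step_nat (s' + t' + 2) s' (by omega)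
  rw [show s' + t' + 2 - s' = t' + 2 by omega] at h6
  have h7 := dbl_shift_nat (s' + t' + 1) s' (by omega)
  rw [show ((s' + t' + 1 : ℕ) : ℤ) + 1 = ((s' + t' + 2 : ℕ) : ℤ) by push_cast; ring,
    show s' + t' + 1 + 1 - s' = t' + 2 by omega,
    show s' + t' + 1 + 1 = s' + t' + 2 by omega] at h7
  -- unfold cc and normalise arguments
  simp only [cc]
  rw [show γ + s' + 2 - (γ + 1) = s' + 1 by omega,
    show γ + t' + 1 - (γ + 1) = t' by omega,
    show γ + s' + 1 - (γ + 1) = s' by omega,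
    show γ + s' + 1 - γ = s' + 1 by omega,
    show γ + t' + 1 - γ = t' + 1 by omega,
    show ((γ + s' + 2 : ℕ) : ℤ) + (γ + t' + 1 : ℕ) - ((γ + 1 : ℕ) : ℤ)
        = ((γ + s' + t' + 2 : ℕ) : ℤ) by push_cast; ring,
    show ((γ + s' + 2 : ℕ) : ℤ) + (γ + t' + 1 : ℕ) - 2 * ((γ + 1 : ℕ) : ℤ)
        = ((s' + t' + 1 : ℕ) : ℤ) by push_cast; ring,
    show ((γ + s' + 1 : ℕ) : ℤ) + (γ + t' + 1 : ℕ) - ((γ + 1 : ℕ) : ℤ)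
        = ((γ + s' + t' + 1 : ℕ) : ℤ) by push_cast; ring,
    show ((γ + s' + 1 : ℕ) : ℤ) + (γ + t' + 1 : ℕ) - 2 * ((γ + 1 : ℕ) : ℤ)
        = ((s' + t' : ℕ) : ℤ) by push_cast; ring,
    show ((γ + s' + 1 : ℕ) : ℤ) + (γ + t' + 1 : ℕ) - ((γ : ℕ) : ℤ)
        = ((γ + s' + t' + 2 : ℕ) : ℤ) by push_cast; ring,
    show ((γ + s' + 1 : ℕ) : ℤ) + (γ + t' + 1 : ℕ) - 2 * ((γ : ℕ) : ℤ)
        = ((s' + t' + 2 : ℕ) : ℤ) by push_cast; ring]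
  simp only [E] at h1 h2 h3 h4 h5 h6 h7 ⊢
  linear_combination
      ((v ^ (2 * (γ + s' + 2)) - 1) * v ^ (2 * (s' + 1) * t')
          * dblBrack ((s' + t' + 1 : ℕ) : ℤ) (s' + 1)
          * (v ^ (2 * (s' + 1)) - 1) * (v ^ (2 * (s' + t' + 2)) - 1)
          * (v ^ (2 * (t' + 1)) - 1)) * h1
    + ((v ^ (2 * (γ + s' + 2)) - 1) * v ^ (2 * (s' + 1) * t')
          * dblBrack ((γ + s' + t' + 1 : ℕ) : ℤ) (γ + 1)
          * (v ^ (2 * (γ + s' + t' + 2)) - 1) * (v ^ (2 * (s' + t' + 2)) - 1)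
          * (v ^ (2 * (t' + 1)) - 1)) * h2
    + ((v ^ (2 * (γ + s' + 2)) - 1) * v ^ (2 * (s' + 1) * t')
          * dblBrack ((γ + s' + t' + 1 : ℕ) : ℤ) (γ + 1)
          * (v ^ (2 * (γ + s' + t' + 2)) - 1) * (v ^ (2 * (s' + t' + 2)) - 1)
          * (v ^ (2 * (t' + 1)) - 1)
        - v ^ (2 * (s' + 1) * (t' + 1)) * dblBrack ((γ + s' + t' + 1 : ℕ) : ℤ) γ
          * (v ^ (2 * (γ + s' + t' + 2)) - 1) * (v ^ (2 * (s' + t' + 1)) - 1)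
          * (v ^ (2 * (s' + t' + 2)) - 1) * (v ^ (2 * (t' + 1)) - 1)) * h3
    - (v ^ (2 * (s' + 1) * (t' + 1)) * dblBrack ((s' + t' + 2 : ℕ) : ℤ) (s' + 1)
          * (v ^ (2 * (s' + 1)) - 1) * (v ^ (2 * (s' + t' + 1)) - 1)
          * (v ^ (2 * (t' + 1)) - 1) * (v ^ (2 * (t' + 1)) - 1)) * h4
    - (v ^ (2 * (s' + 1) * (t' + 1)) * dblBrack ((γ + s' + t' + 1 : ℕ) : ℤ) γ
          * (v ^ (2 * (γ + s' + t' + 2)) - 1) * (v ^ (2 * (s' + t' + 1)) - 1)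
          * (v ^ (2 * (t' + 1)) - 1) * (v ^ (2 * (t' + 1)) - 1)) * h6
    - (v ^ (2 * (s' + 1) * (t' + 1)) * dblBrack ((γ + s' + t' + 1 : ℕ) : ℤ) γ
          * (v ^ (2 * (γ + s' + t' + 2)) - 1) * (v ^ (2 * (s' + t' + 1)) - 1)
          * (v ^ (2 * (t' + 1)) - 1) * (v ^ (2 * (t' + 1)) - 1)) * h7
    + (v ^ (2 * (s' + 1) * (t' + 1)) * dblBrack ((s' + t' : ℕ) : ℤ) s'
          * (v ^ (2 * (s' + t' + 1)) - 1) * (v ^ (2 * (γ + s' + t' + 2)) - 1)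
          * (v ^ (2 * (s' + t' + 2)) - 1) * (v ^ (2 * (t' + 1)) - 1)) * h5

lemma star0 (s t : ℕ) :
    E (s + 1) * cc (s + 1) t 0 = v ^ (2 * t) * E (s + t + 1) * cc s t 0 := by
  have ha := dbl_step_nat (s + t + 1) s (by omega)
  rw [show s + t + 1 - s = t + 1 by omega] at ha
  have hb := dbl_shift_nat (s + t) s (by omega)
  rw [show ((s + t : ℕ) : ℤ) + 1 = ((s + t + 1 : ℕ) : ℤ) by push_cast; ring,
    show s + t + 1 - s = t + 1 by omega] at hb
  simp only [cc, Nat.sub_zero]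
  rw [show ((s + 1 : ℕ) : ℤ) + (t : ℕ) - ((0 : ℕ) : ℤ) = ((s + t + 1 : ℕ) : ℤ) by
      push_cast; ring,
    show ((s + 1 : ℕ) : ℤ) + (t : ℕ) - 2 * ((0 : ℕ) : ℤ) = ((s + t + 1 : ℕ) : ℤ) by
      push_cast; ring,
    show ((s : ℕ) : ℤ) + (t : ℕ) - ((0 : ℕ) : ℤ) = ((s + t : ℕ) : ℤ) by push_cast; ring,
    show ((s : ℕ) : ℤ) + (t : ℕ) - 2 * ((0 : ℕ) : ℤ) = ((s + t : ℕ) : ℤ) by push_cast; ring,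
    dbl_zero, dbl_zero]
  simp only [E] at ha hb ⊢
  linear_combination (v ^ (2 * (s + 1) * t)) * ha + (v ^ (2 * (s + 1) * t)) * hb

lemma staredge (s t'' : ℕ) :
    E (s + 1) * cc (s + 1) (s + t'' + 1) (s + 1) = E (t'' + 1) * cc s (s + t'' + 1) s := by
  have h := dbl_step_nat (s + t'' + 1) s (by omega)
  rw [show s + t'' + 1 - s = t'' + 1 by omega] at h
  simp only [cc]
  rw [show s + 1 - (s + 1) = 0 by omega, show s - s = 0 by omega,
    show ((s + 1 : ℕ) : ℤ) + ((s + t'' + 1 : ℕ) : ℤ) - ((s + 1 : ℕ) : ℤ)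
        = ((s + t'' + 1 : ℕ) : ℤ) by push_cast; ring,
    show ((s : ℕ) : ℤ) + ((s + t'' + 1 : ℕ) : ℤ) - ((s : ℕ) : ℤ)
        = ((s + t'' + 1 : ℕ) : ℤ) by push_cast; ring,
    dbl_zero, dbl_zero]
  simp only [E] at h ⊢
  linear_combination h

theorem key (a : ℤ) (s t : ℕ) :
    dblBrack a s * dblBrack a t
      = ∑ γ ∈ Finset.range (min s t + 1), cc s t γ * dblBrack a (s + t - γ) := by
  induction s with
  | zero => simp [cc, dbl_zero]
  | succ s ih =>
    have hE : E (s + 1) ≠ 0 := E_ne_zero (by omega)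
    apply mul_left_cancel₀ hE
    have hstep := dbl_step a s
    have hL : E (s + 1) * (dblBrack a (s + 1) * dblBrack a t)
        = (∑ γ ∈ Finset.range (min s t + 1), cc s t γ * dblBrack a (s + t - γ))
            * (v ^ (2 * (a - (s : ℤ))) - 1) := by
      calc E (s + 1) * (dblBrack a (s + 1) * dblBrack a t)
          = (dblBrack a (s + 1) * (v ^ (2 * ((s : ℤ) + 1)) - 1)) * dblBrack a t := by
            rw [E_eq, show ((s + 1 : ℕ) : ℤ) = (s : ℤ) + 1 by push_cast; ring]; ring
        _ = (dblBrack a s * (v ^ (2 * (a - (s : ℤ))) - 1)) * dblBrack a t := by rw [hstep]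
        _ = (dblBrack a s * dblBrack a t) * (v ^ (2 * (a - (s : ℤ))) - 1) := by ring
        _ = _ := by rw [ih]
    rw [hL, Finset.sum_mul]
    have hterm : ∀ γ ∈ Finset.range (min s t + 1),
        cc s t γ * dblBrack a (s + t - γ) * (v ^ (2 * (a - (s : ℤ))) - 1)
          = cc s t γ * (v ^ (2 * (t - γ)) * E (s + t - γ + 1) * dblBrack a (s + t - γ + 1))
            + cc s t γ * ((v ^ (2 * (t - γ)) - 1) * dblBrack a (s + t - γ)) := by
      intro γ hγ
      simp only [Finset.mem_range] at hγ
      have h := dbl_split a (s + t - γ) (t - γ)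
      rw [show a - ((s + t - γ : ℕ) : ℤ) + ((t - γ : ℕ) : ℤ) = a - (s : ℤ) by omega] at h
      linear_combination cc s t γ * h
    rw [Finset.sum_congr rfl hterm, Finset.sum_add_distrib, Finset.mul_sum]
    rcases le_or_gt t s with hts | hts
    · -- t ≤ s : min s t = t, min (s+1) t = t
      rw [min_eq_right hts, min_eq_right (by omega)]
      rw [Finset.sum_range_succ'
          (fun γ => E (s + 1) * (cc (s + 1) t γ * dblBrack a (s + 1 + t - γ)))]
      rw [Finset.sum_range_succ'
          (fun γ => cc s t γ * (v ^ (2 * (t - γ)) * E (s + t - γ + 1) * dblBrack a (s + t - γ + 1)))]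
      rw [Finset.sum_range_succ
          (fun γ => cc s t γ * ((v ^ (2 * (t - γ)) - 1) * dblBrack a (s + t - γ)))]
      have hd : cc s t t * ((v ^ (2 * (t - t)) - 1) * dblBrack a (s + t - t)) = 0 := by
        rw [show t - t = 0 by omega]; simp
      rw [hd, add_zero]
      have h0 : E (s + 1) * (cc (s + 1) t 0 * dblBrack a (s + 1 + t - 0))
          = cc s t 0 * (v ^ (2 * (t - 0)) * E (s + t - 0 + 1) * dblBrack a (s + t - 0 + 1)) := by
        have := star0 s t
        rw [show s + 1 + t - 0 = s + t + 1 by omega, show s + t - 0 + 1 = s + t + 1 by omega,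
          show t - 0 = t by omega]
        linear_combination dblBrack a (s + t + 1) * this
      have hsucc : ∀ γ ∈ Finset.range t,
          E (s + 1) * (cc (s + 1) t (γ + 1) * dblBrack a (s + 1 + t - (γ + 1)))
            = cc s t (γ + 1) * (v ^ (2 * (t - (γ + 1))) * E (s + t - (γ + 1) + 1)
                * dblBrack a (s + t - (γ + 1) + 1))
              + cc s t γ * ((v ^ (2 * (t - γ)) - 1) * dblBrack a (s + t - γ)) := by
        intro γ hγ
        simp only [Finset.mem_range] at hγ
        have hc := starc γ (s - γ - 1) (t - γ - 1)
        rw [show γ + (s - γ - 1) + 2 = s + 1 by omega,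
          show γ + (t - γ - 1) + 1 = t by omega,
          show γ + (s - γ - 1) + (t - γ - 1) + 2 = s + t - γ by omega,
          show γ + (s - γ - 1) + 1 = s by omega] at hc
        rw [show s + 1 + t - (γ + 1) = s + t - γ by omega,
          show s + t - (γ + 1) + 1 = s + t - γ by omega,
          show 2 * (t - (γ + 1)) = 2 * (t - γ - 1) by omega,
          show 2 * (t - γ) = 2 * ((t - γ - 1) + 1) by omega,
          show (v ^ (2 * ((t - γ - 1) + 1)) - 1) = E ((t - γ - 1) + 1) from rfl]
        linear_combination dblBrack a (s + t - γ) * hc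
      rw [Finset.sum_congr rfl hsucc, Finset.sum_add_distrib, h0]
      ring
    · -- s < t : min s t = s, min (s+1) t = s+1
      rw [min_eq_left (by omega), min_eq_left (by omega)]
      rw [Finset.sum_range_succ
          (fun γ => E (s + 1) * (cc (s + 1) t γ * dblBrack a (s + 1 + t - γ)))]
      rw [Finset.sum_range_succ'
          (fun γ => E (s + 1) * (cc (s + 1) t γ * dblBrack a (s + 1 + t - γ)))]
      rw [Finset.sum_range_succ'
          (fun γ => cc s t γ * (v ^ (2 * (t - γ)) * E (s + t - γ + 1) * dblBrack a (s + t - γ + 1)))]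
      rw [Finset.sum_range_succ
          (fun γ => cc s t γ * ((v ^ (2 * (t - γ)) - 1) * dblBrack a (s + t - γ)))]
      have h0 : E (s + 1) * (cc (s + 1) t 0 * dblBrack a (s + 1 + t - 0))
          = cc s t 0 * (v ^ (2 * (t - 0)) * E (s + t - 0 + 1) * dblBrack a (s + t - 0 + 1)) := by
        have := star0 s t
        rw [show s + 1 + t - 0 = s + t + 1 by omega, show s + t - 0 + 1 = s + t + 1 by omega,
          show t - 0 = t by omega]
        linear_combination dblBrack a (s + t + 1) * this
      have hedge : E (s + 1) * (cc (s + 1) t (s + 1) * dblBrack a (s + 1 + t - (s + 1)))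
          = cc s t s * ((v ^ (2 * (t - s)) - 1) * dblBrack a (s + t - s)) := by
        have hc := staredge s (t - s - 1)
        rw [show s + (t - s - 1) + 1 = t by omega] at hc
        rw [show s + 1 + t - (s + 1) = t by omega, show s + t - s = t by omega,
          show 2 * (t - s) = 2 * ((t - s - 1) + 1) by omega,
          show (v ^ (2 * ((t - s - 1) + 1)) - 1) = E ((t - s - 1) + 1) from rfl]
        linear_combination dblBrack a t * hc
      have hsucc : ∀ γ ∈ Finset.range s,
          E (s + 1) * (cc (s + 1) t (γ + 1) * dblBrack a (s + 1 + t - (γ + 1)))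
            = cc s t (γ + 1) * (v ^ (2 * (t - (γ + 1))) * E (s + t - (γ + 1) + 1)
                * dblBrack a (s + t - (γ + 1) + 1))
              + cc s t γ * ((v ^ (2 * (t - γ)) - 1) * dblBrack a (s + t - γ)) := by
        intro γ hγ
        simp only [Finset.mem_range] at hγ
        have hc := starc γ (s - γ - 1) (t - γ - 1)
        rw [show γ + (s - γ - 1) + 2 = s + 1 by omega,
          show γ + (t - γ - 1) + 1 = t by omega,
          show γ + (s - γ - 1) + (t - γ - 1) + 2 = s + t - γ by omega,
          show γ + (s - γ - 1) + 1 = s by omega] at hc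
        rw [show s + 1 + t - (γ + 1) = s + t - γ by omega,
          show s + t - (γ + 1) + 1 = s + t - γ by omega,
          show 2 * (t - (γ + 1)) = 2 * (t - γ - 1) by omega,
          show 2 * (t - γ) = 2 * ((t - γ - 1) + 1) by omega,
          show (v ^ (2 * ((t - γ - 1) + 1)) - 1) = E ((t - γ - 1) + 1) from rfl]
        linear_combination dblBrack a (s + t - γ) * hc
      rw [Finset.sum_congr rfl hsucc, Finset.sum_add_distrib, h0, hedge]
      ring

lemma vshape (x1 x2 x3 x4 y1 y2 : ℤ) (D1 D2 D3 : RatFunc ℚ)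
    (h : x1 + x2 + x3 + x4 = y1 + y2) :
    v ^ x1 * (v ^ x2 * D1) * (v ^ x3 * D2 * (v ^ x4 * D3))
      = v ^ y1 * (v ^ y2 * D2 * D3 * D1) := by
  calc v ^ x1 * (v ^ x2 * D1) * (v ^ x3 * D2 * (v ^ x4 * D3))
      = v ^ (x1 + x2 + x3 + x4) * (D1 * D2 * D3) := by
        rw [zpow_add₀ v_ne_zero, zpow_add₀ v_ne_zero, zpow_add₀ v_ne_zero]; ring
    _ = v ^ (y1 + y2) * (D1 * D2 * D3) := by rw [h]
    _ = v ^ y1 * (v ^ y2 * D2 * D3 * D1) := by rw [zpow_add₀ v_ne_zero]; ring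

/-- Product expansion:
`[a,s]·[a,t] = ∑_{γ=0}^{min(s,t)} v^{s·t - a·γ} · [a, s+t-γ] · [s+t-γ; γ, s-γ, t-γ]`,
where the symmetric Gaussian multinomial is `[m; γ, s-γ, t-γ] = [m, γ]·[m-γ, s-γ]`
with `m = s+t-γ`. -/
theorem symBrack_mul_symBrack (a : ℤ) (s t : ℕ) :
    symBrack a s * symBrack a t =
      ∑ γ ∈ Finset.range (min s t + 1),
        v ^ ((s : ℤ) * (t : ℤ) - a * (γ : ℤ)) * symBrack a (s + t - γ) *
          (symBrack ((s : ℤ) + (t : ℤ) - (γ : ℤ)) γ *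
            symBrack ((s : ℤ) + (t : ℤ) - 2 * (γ : ℤ)) (s - γ)) := by
  have hterm : ∀ γ ∈ Finset.range (min s t + 1),
      v ^ ((s : ℤ) * (t : ℤ) - a * (γ : ℤ)) * symBrack a (s + t - γ) *
          (symBrack ((s : ℤ) + (t : ℤ) - (γ : ℤ)) γ *
            symBrack ((s : ℤ) + (t : ℤ) - 2 * (γ : ℤ)) (s - γ))
        = v ^ (-(s : ℤ) * (a - (s : ℤ)) + -(t : ℤ) * (a - (t : ℤ)))
            * (cc s t γ * dblBrack a (s + t - γ)) := by
    intro γ hγ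
    simp only [Finset.mem_range] at hγ
    have hγs : γ ≤ s := by omega
    have hγt : γ ≤ t := by omega
    simp only [symBrack, cc]
    rw [← zpow_natCast v (2 * (s - γ) * (t - γ)),
      show ((2 * (s - γ) * (t - γ) : ℕ) : ℤ) = 2 * ((s : ℤ) - γ) * ((t : ℤ) - γ) by
        rw [Nat.cast_mul, Nat.cast_mul, Nat.cast_sub hγs, Nat.cast_sub hγt]; push_cast; ring,
      show ((s + t - γ : ℕ) : ℤ) = (s : ℤ) + t - γ by omega,
      show ((s - γ : ℕ) : ℤ) = (s : ℤ) - γ by omega]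
    refine vshape _ _ _ _ _ _ _ _ _ ?_
    ring
  rw [Finset.sum_congr rfl hterm, ← Finset.mul_sum, ← key]
  simp only [symBrack]
  rw [zpow_add₀ v_ne_zero]
  ring
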